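/- arXiv:2312.08550 — 6 statements merged into one kernel-verified Lean document; each statement's English description precedes it below -/
import Mathlib

section
/- Let A, B be d×d Hermitian positive semidefinite complex matrices. If the n-fold Kronecker (tensor) power A^{⊗n} equals B^{⊗n} for some n > 0, then A = B. -/
open scoped ComplexOrder

/-- The `n`-fold Kronecker (tensor) power of a `d×d` matrix, with entries
`(A^{⊗n})_{f,g} = ∏ i, A (f i) (g i)`. -/
def kronPow {d : ℕ} (n : ℕ) (A : Matrix (Fin d) (Fin d) ℂ) :
    Matrix (Fin n → Fin d) (Fin n → Fin d) ℂ :=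
  Matrix.of fun f g => ∏ i, A (f i) (g i)

/-- Hermitian positive semidefinite matrices with equal `n`-th Kronecker powers
(`n > 0`) are equal. -/
theorem stmt1 {d : ℕ} (n : ℕ) (hn : 0 < n)
    (A B : Matrix (Fin d) (Fin d) ℂ)
    (hA : A.PosSemidef) (hB : B.PosSemidef)
    (h : kronPow n A = kronPow n B) : A = B := by
  obtain ⟨m, rfl⟩ := Nat.exists_eq_succ_of_ne_zero hn.ne'
  -- diagonal entries are nonnegative
  have diagkey : ∀ (M : Matrix (Fin d) (Fin d) ℂ) (a : Fin d),
      dotProduct (star (Pi.single a 1)) (M.mulVec (Pi.single a 1)) = M a a := by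
    intro M a
    simp [dotProduct, Matrix.mulVec, Pi.single_apply, apply_ite,
      Finset.mul_sum, ite_mul, mul_ite]
  have hdnnA : ∀ a, 0 ≤ A a a := fun a => by
    have := hA.dotProduct_mulVec_nonneg (Pi.single a 1); rwa [diagkey] at this
  have hdnnB : ∀ a, 0 ≤ B a a := fun a => by
    have := hB.dotProduct_mulVec_nonneg (Pi.single a 1); rwa [diagkey] at this
  -- diagonal entries agree
  have hdiag : ∀ a, A a a = B a a := by
    intro a
    have hfg := congrFun (congrFun h (fun _ => a)) (fun _ => a)
    simp only [kronPow, Matrix.of_apply, Finset.prod_const, Finset.card_univ,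
      Fintype.card_fin] at hfg
    obtain ⟨hrA, hiA⟩ := Complex.nonneg_iff.mp (hdnnA a)
    obtain ⟨hrB, hiB⟩ := Complex.nonneg_iff.mp (hdnnB a)
    have eA : A a a = ((A a a).re : ℂ) := Complex.ext (by simp) (by simp [← hiA])
    have eB : B a a = ((B a a).re : ℂ) := Complex.ext (by simp) (by simp [← hiB])
    rw [eA, eB] at hfg ⊢
    norm_cast at hfg ⊢
    exact (pow_left_inj₀ hrA hrB hn.ne').mp hfg
  ext a b
  have key := congrFun (congrFun h (fun _ => a)) (Fin.cons b (fun _ => a))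
  simp only [kronPow, Matrix.of_apply, Fin.prod_univ_succ, Fin.cons_zero,
    Fin.cons_succ, Finset.prod_const, Finset.card_univ, Fintype.card_fin] at key
  -- key : A a b * A a a ^ m = B a b * B a a ^ m
  by_cases hz : A a a = 0
  · -- then row a of A and of B vanish
    have hza : A.mulVec (Pi.single a 1) = 0 := by
      rw [← hA.dotProduct_mulVec_zero_iff, diagkey]; exact hz
    have hzb : B.mulVec (Pi.single a 1) = 0 := by
      rw [← hB.dotProduct_mulVec_zero_iff, diagkey, ← hdiag a]; exact hz
    have h1 : A b a = 0 := by
      have := congrFun hza b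
      simpa [Matrix.mulVec, dotProduct, Pi.single_apply, mul_ite] using this
    have h2 : B b a = 0 := by
      have := congrFun hzb b
      simpa [Matrix.mulVec, dotProduct, Pi.single_apply, mul_ite] using this
    have e1 : A a b = 0 := by
      have := congrFun (congrFun hA.1 b) a
      simp only [Matrix.conjTranspose_apply] at this
      rw [← star_star (A a b), this, h1, star_zero]
    have e2 : B a b = 0 := by
      have := congrFun (congrFun hB.1 b) a
      simp only [Matrix.conjTranspose_apply] at this
      rw [← star_star (B a b), this, h2, star_zero]
    rw [e1, e2]
  · have hpow : (A a a) ^ m ≠ 0 := pow_ne_zero _ hz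
    rw [← hdiag a] at key
    exact mul_right_cancel₀ hpow key
end

section
/- Let A₁,…,A_k, B₁,…,B_k ∈ ℂ^{d×d} and n > 0. Suppose that for all x ∈ ℂ^k, (Σᵢ xᵢ Aᵢ)^{⊗n} · (Σᵢ x̄ᵢ Aᵢᴴ)^{⊗n} = (Σᵢ xᵢ Bᵢ)^{⊗n} · (Σᵢ x̄ᵢ Bᵢᴴ)^{⊗n}. Then there exists a unitary d×d matrix U such that Aᵢ = Bᵢ U for every i. -/
open Matrix

lemma toEuclideanLin_mul' {a b c : Type*} [Fintype a] [Fintype b] [Fintype c]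
    [DecidableEq b] [DecidableEq c]
    (M : Matrix a b ℂ) (N : Matrix b c ℂ) :
    Matrix.toEuclideanLin (M * N) = (Matrix.toEuclideanLin M).comp (Matrix.toEuclideanLin N) := by
  ext v i
  simp [Matrix.toEuclideanLin_apply, Matrix.mulVec_mulVec]

lemma toEuclideanLin_one' {d : Type*} [Fintype d] [DecidableEq d] :
    (Matrix.toEuclideanLin (1 : Matrix d d ℂ)) = LinearMap.id := by
  ext v i
  simp [Matrix.toEuclideanLin_apply]

lemma exists_unitary_of_mul_conjTranspose {d : ℕ} {m : Type*} [Fintype m] [DecidableEq m]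
    (X Y : Matrix m (Fin d) ℂ) (h : X * Xᴴ = Y * Yᴴ) :
    ∃ U : Matrix (Fin d) (Fin d) ℂ, U ∈ Matrix.unitaryGroup (Fin d) ℂ ∧ X = Y * U := by
  classical
  set f : EuclideanSpace ℂ m →ₗ[ℂ] EuclideanSpace ℂ (Fin d) := Matrix.toEuclideanLin Xᴴ with hf
  set g : EuclideanSpace ℂ m →ₗ[ℂ] EuclideanSpace ℂ (Fin d) := Matrix.toEuclideanLin Yᴴ with hg
  have hinner : ∀ v w, inner ℂ (f v) (f w) = (inner ℂ (g v) (g w) : ℂ) := by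
    intro v w
    have h1 : f = LinearMap.adjoint (Matrix.toEuclideanLin X) :=
      Matrix.toEuclideanLin_conjTranspose_eq_adjoint X
    have h2 : g = LinearMap.adjoint (Matrix.toEuclideanLin Y) :=
      Matrix.toEuclideanLin_conjTranspose_eq_adjoint Y
    show inner ℂ (f v) (f w) = (inner ℂ (g v) (g w) : ℂ)
    rw [h1, h2, LinearMap.adjoint_inner_left, LinearMap.adjoint_inner_left]
    have : (Matrix.toEuclideanLin X).comp f = (Matrix.toEuclideanLin Y).comp g := by
      rw [hf, hg, ← toEuclideanLin_mul', ← toEuclideanLin_mul', h]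
    have := congrArg (fun L => (L : _ →ₗ[ℂ] _) w) this
    simp only [LinearMap.comp_apply] at this
    rw [← h1, ← h2, this]
  have hnorm : ∀ v, ‖f v‖ = ‖g v‖ := by
    intro v
    rw [norm_eq_sqrt_re_inner (𝕜 := ℂ), norm_eq_sqrt_re_inner (𝕜 := ℂ), hinner]
  have hker : LinearMap.ker g ≤ LinearMap.ker f := by
    intro v hv
    simp only [LinearMap.mem_ker] at hv ⊢
    have := hnorm v
    rw [hv, norm_zero, norm_eq_zero] at this
    exact this
  set fbar : (EuclideanSpace ℂ m ⧸ LinearMap.ker g) →ₗ[ℂ] EuclideanSpace ℂ (Fin d) :=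
    (LinearMap.ker g).liftQ f hker with hfbar
  set e := LinearMap.quotKerEquivRange g with he
  set T : LinearMap.range g →ₗ[ℂ] EuclideanSpace ℂ (Fin d) := fbar.comp e.symm.toLinearMap with hT
  have hTapp : ∀ v, T ⟨g v, LinearMap.mem_range_self g v⟩ = f v := by
    intro v
    have : e.symm ⟨g v, LinearMap.mem_range_self g v⟩ = (LinearMap.ker g).mkQ v :=
      LinearMap.quotKerEquivRange_symm_apply_image g v (LinearMap.mem_range_self g v)
    simp only [hT, LinearMap.comp_apply, LinearEquiv.coe_toLinearMap, this]
    exact Submodule.liftQ_apply _ f v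
  have hTnorm : ∀ s : LinearMap.range g, ‖T s‖ = ‖s‖ := by
    rintro ⟨s, hs⟩
    obtain ⟨v, rfl⟩ := hs
    rw [hTapp v]
    rw [hnorm v]
    rfl
  set L : LinearMap.range g →ₗᵢ[ℂ] EuclideanSpace ℂ (Fin d) := ⟨T, hTnorm⟩ with hL
  set ι := L.extend with hι
  have hιg : ∀ v, ι (g v) = f v := by
    intro v
    calc ι (g v)
        = ι ((⟨g v, LinearMap.mem_range_self g v⟩ : LinearMap.range g) :
            EuclideanSpace ℂ (Fin d)) := rfl
    _ = L ⟨g v, LinearMap.mem_range_self g v⟩ := L.extend_apply _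
    _ = f v := hTapp v
  set W : Matrix (Fin d) (Fin d) ℂ := Matrix.toEuclideanLin.symm ι.toLinearMap with hW
  have hWlin : Matrix.toEuclideanLin W = ι.toLinearMap := Matrix.toEuclideanLin.apply_symm_apply _
  have h1 : W * Yᴴ = Xᴴ := by
    apply Matrix.toEuclideanLin.injective
    rw [toEuclideanLin_mul', hWlin]
    ext v : 1
    exact hιg v
  have hWU : Wᴴ * W = 1 := by
    apply Matrix.toEuclideanLin.injective
    rw [toEuclideanLin_mul', toEuclideanLin_one', Matrix.toEuclideanLin_conjTranspose_eq_adjoint,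
      hWlin]
    ext w : 1
    apply ext_inner_left ℂ
    intro v
    rw [LinearMap.comp_apply, LinearMap.adjoint_inner_right]
    simp only [LinearIsometry.coe_toLinearMap]
    rw [ι.inner_map_map]
    simp
  refine ⟨Wᴴ, ?_, ?_⟩
  · rw [Matrix.mem_unitaryGroup_iff]
    rw [Matrix.star_eq_conjTranspose, Matrix.conjTranspose_conjTranspose]
    exact hWU
  · have := congrArg Matrix.conjTranspose h1
    simpa [Matrix.conjTranspose_mul] using this.symm

lemma kronPow_mul {d n : ℕ} (M N : Matrix (Fin d) (Fin d) ℂ) :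
    kronPow n (M * N) = kronPow n M * kronPow n N := by
  ext f g
  show ∏ i, (M * N) (f i) (g i) = ∑ h : Fin n → Fin d, (∏ i, M (f i) (h i)) * ∏ i, N (h i) (g i)
  simp only [Matrix.mul_apply]
  rw [Finset.prod_univ_sum]
  rw [Fintype.piFinset_univ]
  congr 1
  ext h
  rw [← Finset.prod_mul_distrib]

lemma kron_cancel {d : ℕ} (n : ℕ) (hn : 0 < n) (X Y : Matrix (Fin d) (Fin d) ℂ)
    (h : kronPow n (X * Xᴴ) = kronPow n (Y * Yᴴ)) : X * Xᴴ = Y * Yᴴ := by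
  classical
  obtain ⟨m, rfl⟩ : ∃ m, n = m + 1 := ⟨n - 1, (Nat.succ_pred_eq_of_pos hn).symm⟩
  set P := X * Xᴴ with hP
  set Q := Y * Yᴴ with hQ
  have hent : ∀ f g : Fin (m+1) → Fin d, ∏ i, P (f i) (g i) = ∏ i, Q (f i) (g i) := by
    intro f g
    exact congrFun (congrFun h f) g
  have hdiagP : ∀ a, P a a = ((∑ c, Complex.normSq (X a c) : ℝ) : ℂ) := by
    intro a
    simp [hP, Matrix.mul_apply, Matrix.conjTranspose_apply, Complex.mul_conj]
  have hdiagQ : ∀ a, Q a a = ((∑ c, Complex.normSq (Y a c) : ℝ) : ℂ) := by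
    intro a
    simp [hQ, Matrix.mul_apply, Matrix.conjTranspose_apply, Complex.mul_conj]
  have hdd : ∀ a, P a a = Q a a := by
    intro a
    have := hent (fun _ => a) (fun _ => a)
    simp only [Finset.prod_const, Finset.card_univ, Fintype.card_fin] at this
    rw [hdiagP, hdiagQ] at this ⊢
    rw [← Complex.ofReal_pow, ← Complex.ofReal_pow, Complex.ofReal_inj] at this
    norm_cast
    have h1 : (0:ℝ) ≤ ∑ c, Complex.normSq (X a c) :=
      Finset.sum_nonneg fun c _ => Complex.normSq_nonneg _
    have h2 : (0:ℝ) ≤ ∑ c, Complex.normSq (Y a c) :=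
      Finset.sum_nonneg fun c _ => Complex.normSq_nonneg _
    exact (pow_left_inj₀ h1 h2 (Nat.succ_ne_zero m)).mp this
  by_cases hz : ∀ j, P j j = 0
  · have hX : X = 0 := by
      ext a c
      have := hz a
      rw [hdiagP] at this
      have h0 : ∑ c, Complex.normSq (X a c) = 0 := by exact_mod_cast this
      have := (Finset.sum_eq_zero_iff_of_nonneg
        (fun c _ => Complex.normSq_nonneg (X a c))).mp h0 c (Finset.mem_univ c)
      simpa [Complex.normSq_eq_zero] using this
    have hY : Y = 0 := by
      ext a c
      have := (hdd a).symm.trans (hz a)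
      rw [hdiagQ] at this
      have h0 : ∑ c, Complex.normSq (Y a c) = 0 := by exact_mod_cast this
      have := (Finset.sum_eq_zero_iff_of_nonneg
        (fun c _ => Complex.normSq_nonneg (Y a c))).mp h0 c (Finset.mem_univ c)
      simpa [Complex.normSq_eq_zero] using this
    rw [hP, hQ, hX, hY]
  · push_neg at hz
    obtain ⟨j, hj⟩ := hz
    ext a b
    have := hent (Fin.cons a fun _ => j) (Fin.cons b fun _ => j)
    rw [Fin.prod_univ_succ, Fin.prod_univ_succ] at this
    simp only [Fin.cons_zero, Fin.cons_succ, Finset.prod_const, Finset.card_univ,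
      Fintype.card_fin] at this
    rw [hdd j] at this
    have hQj : Q j j ≠ 0 := by rw [← hdd j]; exact hj
    exact mul_right_cancel₀ (pow_ne_zero m hQj) this

section polarization

variable {d k : ℕ}

lemma expand_gram (x : Fin k → ℂ) (M : Fin k → Matrix (Fin d) (Fin d) ℂ) :
    (∑ i, x i • M i) * (∑ i, x i • M i)ᴴ
      = ∑ i, ∑ j, (x i * (starRingEnd ℂ) (x j)) • (M i * (M j)ᴴ) := by
  rw [Matrix.conjTranspose_sum, Finset.sum_mul]
  refine Finset.sum_congr rfl fun i _ => ?_
  rw [Finset.mul_sum]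
  refine Finset.sum_congr rfl fun j _ => ?_
  rw [Matrix.conjTranspose_smul, Matrix.smul_mul, Matrix.mul_smul, smul_smul]
  rfl

lemma collapse_pair (C : Fin k → Fin k → Matrix (Fin d) (Fin d) ℂ)
    (hC : ∀ x : Fin k → ℂ, ∑ i, ∑ j, (x i * (starRingEnd ℂ) (x j)) • C i j = 0)
    (i₀ j₀ : Fin k) (hne : i₀ ≠ j₀) (c : ℂ) :
    C i₀ i₀ + (starRingEnd ℂ) c • C i₀ j₀ + c • C j₀ i₀
      + (c * (starRingEnd ℂ) c) • C j₀ j₀ = 0 := by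
  classical
  set x : Fin k → ℂ := fun i => if i = i₀ then 1 else if i = j₀ then c else 0 with hx
  have hxout : ∀ i, i ∉ ({i₀, j₀} : Finset (Fin k)) → x i = 0 := by
    intro i hi
    simp only [Finset.mem_insert, Finset.mem_singleton, not_or] at hi
    simp [hx, hi.1, hi.2]
  have key := hC x
  rw [← Finset.sum_subset (Finset.subset_univ ({i₀, j₀} : Finset (Fin k)))
    (fun i _ hi => Finset.sum_eq_zero fun j _ => by rw [hxout i hi, zero_mul, zero_smul])] at key
  have key2 : ∀ i : Fin k, ∑ j, (x i * (starRingEnd ℂ) (x j)) • C i j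
      = ∑ j ∈ ({i₀, j₀} : Finset (Fin k)), (x i * (starRingEnd ℂ) (x j)) • C i j := by
    intro i
    rw [← Finset.sum_subset (Finset.subset_univ ({i₀, j₀} : Finset (Fin k)))
      (fun j _ hj => by rw [hxout j hj, map_zero, mul_zero, zero_smul])]
  simp only [key2] at key
  rw [Finset.sum_pair hne, Finset.sum_pair hne, Finset.sum_pair hne] at key
  have hxi : x i₀ = 1 := by simp [hx]
  have hxj : x j₀ = c := by simp [hx, hne.symm]
  rw [hxi, hxj] at key
  simpa [mul_comm, add_assoc] using key

lemma diag_zero (C : Fin k → Fin k → Matrix (Fin d) (Fin d) ℂ)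
    (hC : ∀ x : Fin k → ℂ, ∑ i, ∑ j, (x i * (starRingEnd ℂ) (x j)) • C i j = 0)
    (i₀ : Fin k) : C i₀ i₀ = 0 := by
  classical
  set x : Fin k → ℂ := fun i => if i = i₀ then 1 else 0 with hx
  have hxout : ∀ i, i ∉ ({i₀} : Finset (Fin k)) → x i = 0 := by
    intro i hi
    simp only [Finset.mem_singleton] at hi
    simp [hx, hi]
  have key := hC x
  rw [← Finset.sum_subset (Finset.subset_univ ({i₀} : Finset (Fin k)))
    (fun i _ hi => Finset.sum_eq_zero fun j _ => by rw [hxout i hi, zero_mul, zero_smul])] at key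
  have key2 : ∀ i : Fin k, ∑ j, (x i * (starRingEnd ℂ) (x j)) • C i j
      = ∑ j ∈ ({i₀} : Finset (Fin k)), (x i * (starRingEnd ℂ) (x j)) • C i j := by
    intro i
    rw [← Finset.sum_subset (Finset.subset_univ ({i₀} : Finset (Fin k)))
      (fun j _ hj => by rw [hxout j hj, map_zero, mul_zero, zero_smul])]
  simp only [key2] at key
  rw [Finset.sum_singleton, Finset.sum_singleton] at key
  have hxi : x i₀ = 1 := by simp [hx]
  rw [hxi] at key
  simpa using key

lemma offdiag_zero (C : Fin k → Fin k → Matrix (Fin d) (Fin d) ℂ)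
    (hC : ∀ x : Fin k → ℂ, ∑ i, ∑ j, (x i * (starRingEnd ℂ) (x j)) • C i j = 0)
    (hdiag : ∀ i, C i i = 0) (i₀ j₀ : Fin k) (hne : i₀ ≠ j₀) : C i₀ j₀ = 0 := by
  have h1 := collapse_pair C hC i₀ j₀ hne 1
  have h2 := collapse_pair C hC i₀ j₀ hne Complex.I
  rw [hdiag, hdiag] at h1 h2
  simp only [_root_.map_one, one_smul, one_mul, mul_one, zero_add, add_zero, smul_zero] at h1 h2
  rw [Complex.conj_I] at h2
  have h3 := congrArg (fun M => Complex.I • M) h2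
  simp only [smul_add, smul_smul, smul_zero] at h3
  rw [mul_neg, Complex.I_mul_I, neg_neg, one_smul, neg_smul, one_smul, add_neg_eq_zero] at h3
  rw [← h3] at h1
  have h5 : ((2:ℂ)) • C i₀ j₀ = 0 := by rw [two_smul]; exact h1
  rcases smul_eq_zero.mp h5 with h | h
  · exact absurd h two_ne_zero
  · exact h

end polarization

/-- If `(Σᵢ xᵢ Aᵢ)^{⊗n} (Σᵢ x̄ᵢ Aᵢᴴ)^{⊗n} = (Σᵢ xᵢ Bᵢ)^{⊗n} (Σᵢ x̄ᵢ Bᵢᴴ)^{⊗n}`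
for all `x ∈ ℂᵏ`, then `Aᵢ = Bᵢ U` for a single unitary `U` and every `i`. -/
theorem stmt3 {d k : ℕ} (n : ℕ) (hn : 0 < n)
    (A B : Fin k → Matrix (Fin d) (Fin d) ℂ)
    (h : ∀ x : Fin k → ℂ,
      kronPow n (∑ i, x i • A i) *
        kronPow n (∑ i, (starRingEnd ℂ) (x i) • (A i).conjTranspose)
      = kronPow n (∑ i, x i • B i) *
        kronPow n (∑ i, (starRingEnd ℂ) (x i) • (B i).conjTranspose)) :
    ∃ U : Matrix (Fin d) (Fin d) ℂ, U ∈ Matrix.unitaryGroup (Fin d) ℂ ∧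
      ∀ i, A i = B i * U := by
  classical
  have hct : ∀ (M : Fin k → Matrix (Fin d) (Fin d) ℂ) (x : Fin k → ℂ),
      (∑ i, x i • M i)ᴴ = ∑ i, (starRingEnd ℂ) (x i) • (M i)ᴴ := by
    intro M x
    rw [Matrix.conjTranspose_sum]
    exact Finset.sum_congr rfl fun i _ => by rw [Matrix.conjTranspose_smul]; rfl
  have hgram : ∀ x : Fin k → ℂ,
      (∑ i, x i • A i) * (∑ i, x i • A i)ᴴ = (∑ i, x i • B i) * (∑ i, x i • B i)ᴴ := by
    intro x
    apply kron_cancel n hn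
    rw [kronPow_mul, kronPow_mul, hct A x, hct B x]
    exact h x
  set C : Fin k → Fin k → Matrix (Fin d) (Fin d) ℂ :=
    fun i j => A i * (A j)ᴴ - B i * (B j)ᴴ with hCdef
  have hC : ∀ x : Fin k → ℂ, ∑ i, ∑ j, (x i * (starRingEnd ℂ) (x j)) • C i j = 0 := by
    intro x
    have := hgram x
    rw [expand_gram, expand_gram] at this
    rw [← sub_eq_zero] at this
    rw [← this, ← Finset.sum_sub_distrib]
    refine Finset.sum_congr rfl fun i _ => ?_
    rw [← Finset.sum_sub_distrib]
    refine Finset.sum_congr rfl fun j _ => ?_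
    rw [hCdef, smul_sub]
  have hAB : ∀ i j, A i * (A j)ᴴ = B i * (B j)ᴴ := by
    intro i j
    have : C i j = 0 := by
      by_cases hij : i = j
      · subst hij; exact diag_zero C hC i
      · exact offdiag_zero C hC (diag_zero C hC) i j hij
    rw [hCdef] at this
    exact sub_eq_zero.mp this
  set X : Matrix (Fin k × Fin d) (Fin d) ℂ := Matrix.of fun p c => A p.1 p.2 c with hXdef
  set Y : Matrix (Fin k × Fin d) (Fin d) ℂ := Matrix.of fun p c => B p.1 p.2 c with hYdef
  have hXY : X * Xᴴ = Y * Yᴴ := by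
    ext p q
    have := congrFun (congrFun (hAB p.1 q.1) p.2) q.2
    simpa [hXdef, hYdef, Matrix.mul_apply, Matrix.conjTranspose_apply] using this
  obtain ⟨U, hU, hXU⟩ := exists_unitary_of_mul_conjTranspose X Y hXY
  refine ⟨U, hU, fun i => ?_⟩
  ext a c
  have := congrFun (congrFun hXU (i, a)) c
  simpa [hXdef, hYdef, Matrix.mul_apply] using this
end

section
/- Let G be a finite group, V₁,…,V_k finite-dimensional complex Hilbert spaces, and for each i let Wᵢ : G → End(Vᵢ) be a family of operators. Suppose that for every g ∈ G and every i there exists ρᵢ(g) ∈ U(Vᵢ) such that Wᵢ(g⁻¹ h) = ρᵢ(g) Wᵢ(h) for all h ∈ G, and that the set {Wᵢ(g) : g ∈ G} spans End(Vᵢ) as a complex vector space. Then each ρᵢ : G → U(Vᵢ) is a group homomorphism, and Wᵢ(g) = Wᵢ(1) ρᵢ(g)⁻¹ for all g ∈ G (where Wᵢ(1) corresponds to the identity element, after identifying ρᵢ(g)⁻¹ = ρᵢ(g)ᴴ). -/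
lemma aux_cancel {G : Type*} {n : Type*} [Fintype n] [DecidableEq n]
    (W : G → Matrix n n ℂ)
    (hspan : Submodule.span ℂ (Set.range W) = ⊤)
    (M : Matrix n n ℂ) (h : ∀ g, W g * M = 0) : M = 0 := by
  have h1 : (1 : Matrix n n ℂ) ∈ Submodule.span ℂ (Set.range W) := by
    rw [hspan]; trivial
  have key : ∀ A ∈ Submodule.span ℂ (Set.range W), A * M = 0 := by
    intro A hA
    induction hA using Submodule.span_induction with
    | mem x hx => obtain ⟨g, rfl⟩ := hx; exact h g
    | zero => simp
    | add x y _ _ hx hy => rw [add_mul, hx, hy, add_zero]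
    | smul c x _ hx => rw [Matrix.smul_mul, hx, smul_zero]
  have := key 1 h1
  simpa using this

/-- If `W i : G → End(V i)` satisfies `(g · W i) = ρ i g · W i`, i.e.
`W i (g⁻¹ h) = W i h * ρ i g` for unitaries `ρ i g`, and `{W i g}_g` spans
`End(V i)`, then each `ρ i` is a group homomorphism and
`W i g = W i 1 * (ρ i g)ᴴ`. -/
theorem stmt5 {G : Type*} [Group G] [Fintype G] {k : ℕ} (d : Fin k → ℕ)
    (W : ∀ i, G → Matrix (Fin (d i)) (Fin (d i)) ℂ)
    (ρ : ∀ i, G → Matrix (Fin (d i)) (Fin (d i)) ℂ)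
    (hρu : ∀ i g, ρ i g ∈ Matrix.unitaryGroup (Fin (d i)) ℂ)
    (hact : ∀ i (g h : G), W i (g⁻¹ * h) = W i h * ρ i g)
    (hspan : ∀ i, Submodule.span ℂ (Set.range (W i)) = ⊤) :
    (∀ i (g h : G), ρ i (g * h) = ρ i g * ρ i h) ∧
    (∀ i (g : G), W i g = W i 1 * (ρ i g).conjTranspose) := by
  have hmul : ∀ i (g h : G), ρ i (g * h) = ρ i g * ρ i h := by
    intro i g h
    have key : ∀ x : G, W i x * (ρ i (g * h) - ρ i g * ρ i h) = 0 := by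
      intro x
      have e1 : W i ((g * h)⁻¹ * x) = W i x * ρ i (g * h) := hact i (g * h) x
      have e2 : W i ((g * h)⁻¹ * x) = W i x * (ρ i g * ρ i h) := by
        have : (g * h)⁻¹ * x = h⁻¹ * (g⁻¹ * x) := by group
        rw [this, hact i h (g⁻¹ * x), hact i g x, mul_assoc]
      rw [Matrix.mul_sub, e1.symm, e2.symm, sub_self]
    have := aux_cancel (W i) (hspan i) _ key
    exact sub_eq_zero.mp this
  have hone : ∀ i, ρ i 1 = 1 := by
    intro i
    have key : ∀ x : G, W i x * (ρ i 1 - 1) = 0 := by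
      intro x
      have := hact i 1 x
      rw [inv_one, one_mul] at this
      rw [Matrix.mul_sub, ← this, Matrix.mul_one, sub_self]
    have := aux_cancel (W i) (hspan i) _ key
    exact sub_eq_zero.mp this
  have hinv : ∀ i (g : G), ρ i g⁻¹ = (ρ i g).conjTranspose := by
    intro i g
    have h1 : ρ i g * ρ i g⁻¹ = 1 := by
      rw [← hmul i g g⁻¹, mul_inv_cancel, hone]
    have h2 : (ρ i g).conjTranspose * ρ i g = 1 := by
      have := (Matrix.mem_unitaryGroup_iff'.mp (hρu i g))
      simpa [Matrix.star_eq_conjTranspose] using this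
    calc ρ i g⁻¹ = ((ρ i g).conjTranspose * ρ i g) * ρ i g⁻¹ := by rw [h2, Matrix.one_mul]
      _ = (ρ i g).conjTranspose * (ρ i g * ρ i g⁻¹) := by rw [Matrix.mul_assoc]
      _ = (ρ i g).conjTranspose := by rw [h1, Matrix.mul_one]
  refine ⟨hmul, fun i g => ?_⟩
  have := hact i g⁻¹ 1
  rw [inv_inv, mul_one] at this
  rw [this, hinv]
end

section
/- Let G be a finite commutative group, n even, and x, y ∈ ℝ^G ⊆ ℂ[G] with all Fourier coefficients nonzero. If β_{ρ̲}(x) = β_{ρ̲}(y) for all tuples ρ̲ = (ρ₁,…,ρₙ) ∈ Ĝⁿ, where β_{ρ̲}(z) = ẑ_{ρ₁} ⋯ ẑ_{ρₙ} conj(ẑ_{ρ₁⋯ρₙ}), then x = g·y for some g ∈ G. -/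
/-- The Fourier transform of `x : G → ℂ` at a character `ρ : G →* ℂ`. -/
noncomputable def fhat {G : Type*} [CommGroup G] [Fintype G]
    (x : G → ℂ) (ρ : G →* ℂ) : ℂ :=
  ∑ g : G, (starRingEnd ℂ) (ρ g) * x g

namespace Stmt11Aux

variable {G : Type*} [CommGroup G] [Fintype G]

/-- The "inverse" character `g ↦ ρ g⁻¹`. -/
def invC (ρ : G →* ℂ) : G →* ℂ where
  toFun g := ρ g⁻¹
  map_one' := by simp
  map_mul' a b := by show ρ (a * b)⁻¹ = ρ a⁻¹ * ρ b⁻¹; rw [mul_inv, map_mul]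

lemma conj_char (ρ : G →* ℂ) (g : G) : (starRingEnd ℂ) (ρ g) = ρ g⁻¹ := by
  have h1 : ρ g ^ Fintype.card G = 1 := by
    rw [← map_pow, pow_card_eq_one, map_one]
  have hn : ‖ρ g‖ = 1 := Complex.norm_eq_one_of_pow_eq_one h1 Fintype.card_ne_zero
  have hinv : ρ g⁻¹ = (ρ g)⁻¹ :=
    eq_inv_of_mul_eq_one_left (by rw [← map_mul, inv_mul_cancel, map_one])
  rw [hinv, ← Complex.inv_eq_conj hn]

@[simp] lemma invC_apply (ρ : G →* ℂ) (g : G) : invC ρ g = ρ g⁻¹ := rfl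

@[simp] lemma invC_invC (ρ : G →* ℂ) : invC (invC ρ) = ρ := by
  ext g; simp

@[simp] lemma invC_one : invC (1 : G →* ℂ) = 1 := by ext g; simp

lemma conj_fhat (x : G → ℝ) (ρ : G →* ℂ) :
    (starRingEnd ℂ) (fhat (fun g => (x g : ℂ)) ρ) = fhat (fun g => (x g : ℂ)) (invC ρ) := by
  unfold fhat
  rw [map_sum]
  refine Finset.sum_congr rfl fun g _ => ?_
  rw [map_mul, Complex.conj_conj, Complex.conj_ofReal, invC_apply, conj_char, inv_inv]

/-- AddChar from a monoid hom. -/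
def homToAddChar (ρ : G →* ℂ) : AddChar (Additive G) ℂ where
  toFun a := ρ a.toMul
  map_zero_eq_one' := ρ.map_one
  map_add_eq_mul' a b := ρ.map_mul a.toMul b.toMul

/-- Monoid hom from an AddChar. -/
def addCharToHom (ψ : AddChar (Additive G) ℂ) : G →* ℂ where
  toFun g := ψ (Additive.ofMul g)
  map_one' := ψ.map_zero_eq_one
  map_mul' a b := ψ.map_add_eq_mul _ _

@[simp] lemma addCharToHom_homToAddChar (ρ : G →* ℂ) : addCharToHom (homToAddChar ρ) = ρ := by
  ext g; rfl

@[simp] lemma addCharToHom_zero : addCharToHom (0 : AddChar (Additive G) ℂ) = 1 := by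
  ext g; rfl

@[simp] lemma addCharToHom_add (ψ φ : AddChar (Additive G) ℂ) :
    addCharToHom (ψ + φ) = addCharToHom ψ * addCharToHom φ := by
  ext g; rfl

/-- Fourier inversion: injectivity of the Fourier transform. -/
lemma fhat_inj (u v : G → ℂ) (h : ∀ ρ : G →* ℂ, fhat u ρ = fhat v ρ) : u = v := by
  classical
  set w : G → ℂ := u - v with hw
  have hw0 : ∀ ρ : G →* ℂ, ∑ g : G, ρ g * w g = 0 := by
    intro ρ
    have h' := sub_eq_zero.2 (h (invC ρ))
    rw [← h']
    unfold fhat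
    rw [← Finset.sum_sub_distrib]
    refine Finset.sum_congr rfl fun g _ => ?_
    rw [← mul_sub, conj_char, invC_apply, inv_inv]
    rfl
  have hw0' : ∀ ψ : AddChar (Additive G) ℂ, ∑ a : Additive G, ψ a * w a.toMul = 0 := by
    intro ψ
    have := hw0 (addCharToHom ψ)
    rw [← this]
    exact (Fintype.sum_equiv Additive.ofMul _ _ fun g => rfl).symm
  have hspan : ∀ f : Additive G → ℂ, ∑ a : Additive G, f a * w a.toMul = 0 := by
    intro f
    have hrep := (AddChar.complexBasis (Additive G)).sum_repr f
    conv_lhs => rw [← hrep]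
    simp only [Finset.sum_apply, Pi.smul_apply, AddChar.complexBasis_apply, smul_eq_mul]
    simp_rw [Finset.sum_mul]
    rw [Finset.sum_comm]
    refine Finset.sum_eq_zero fun ψ _ => ?_
    simp_rw [mul_assoc]
    rw [← Finset.mul_sum, hw0' ψ, mul_zero]
  have hzero : ∀ g : G, w g = 0 := by
    intro g
    have := hspan (fun a => if a = Additive.ofMul g then 1 else 0)
    simpa using this
  funext g
  have := hzero g
  rw [hw] at this
  simpa [sub_eq_zero] using this

/-- The ratio of Fourier coefficients. -/
noncomputable def eta (x y : G → ℝ) (ρ : G →* ℂ) : ℂ :=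
  fhat (fun g => (x g : ℂ)) ρ / fhat (fun g => (y g : ℂ)) ρ

end Stmt11Aux

open Stmt11Aux in
/-- Completeness of even-order spectra: if `x, y ∈ ℝ^G` have nowhere-vanishing
Fourier coefficients and all their spectra of even order `n > 0` agree, then
`x = g · y` for some `g ∈ G`. -/
theorem stmt11 {G : Type*} [CommGroup G] [Fintype G]
    (n : ℕ) (hn : Even n) (hn0 : 0 < n)
    (x y : G → ℝ)
    (hx : ∀ ρ : G →* ℂ, fhat (fun g => (x g : ℂ)) ρ ≠ 0)
    (hy : ∀ ρ : G →* ℂ, fhat (fun g => (y g : ℂ)) ρ ≠ 0)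
    (hβ : ∀ ρs : Fin n → (G →* ℂ),
      (∏ j, fhat (fun g => (x g : ℂ)) (ρs j)) *
        (starRingEnd ℂ) (fhat (fun g => (x g : ℂ)) (∏ j, ρs j))
      = (∏ j, fhat (fun g => (y g : ℂ)) (ρs j)) *
        (starRingEnd ℂ) (fhat (fun g => (y g : ℂ)) (∏ j, ρs j))) :
    ∃ g : G, ∀ h : G, x h = y (g⁻¹ * h) := by
  classical
  obtain ⟨m, rfl⟩ : ∃ m, n = m + 2 := ⟨n - 2, by rcases hn with ⟨k, hk⟩; omega⟩
  have hη0 : ∀ ρ : G →* ℂ, eta x y ρ ≠ 0 := fun ρ => div_ne_zero (hx ρ) (hy ρ)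
  have hkey : ∀ ρs : Fin (m + 2) → (G →* ℂ),
      (∏ j, eta x y (ρs j)) * eta x y (invC (∏ j, ρs j)) = 1 := by
    intro ρs
    have hb := hβ ρs
    rw [conj_fhat x, conj_fhat y] at hb
    have hYne : (∏ j, fhat (fun g => (y g : ℂ)) (ρs j)) *
        fhat (fun g => (y g : ℂ)) (invC (∏ j, ρs j)) ≠ 0 :=
      mul_ne_zero (Finset.prod_ne_zero_iff.2 fun j _ => hy _) (hy _)
    simp only [eta]
    rw [Finset.prod_div_distrib, div_mul_div_comm, div_eq_one_iff_eq hYne]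
    exact hb
  have hone : eta x y 1 = 1 := by
    have h1 := hkey (fun _ => 1)
    rw [Finset.prod_const_one, invC_one, Finset.prod_const, Finset.card_univ,
      Fintype.card_fin, ← pow_succ] at h1
    have hx1 : fhat (fun g => (x g : ℂ)) 1 = ((∑ g, x g : ℝ) : ℂ) := by
      simp [fhat]
    have hy1 : fhat (fun g => (y g : ℂ)) 1 = ((∑ g, y g : ℝ) : ℂ) := by
      simp [fhat]
    have heq : eta x y 1 = (((∑ g, x g) / (∑ g, y g) : ℝ) : ℂ) := by
      rw [eta, hx1, hy1]; push_cast; ring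
    rw [heq] at h1 ⊢
    have hr : ((∑ g, x g) / (∑ g, y g) : ℝ) ^ (m + 2 + 1) = 1 := by exact_mod_cast h1
    have hodd : Odd (m + 2 + 1) := by
      rw [Nat.even_iff] at hn; rw [Nat.odd_iff]; omega
    have : ((∑ g, x g) / (∑ g, y g) : ℝ) = 1 :=
      hodd.strictMono_pow.injective (by rw [hr, one_pow])
    rw [this]; norm_num
  have hmul3 : ∀ ρ σ : G →* ℂ, eta x y ρ * eta x y σ * eta x y (invC (ρ * σ)) = 1 := by
    intro ρ σ
    have h1 := hkey (Fin.cons ρ (Fin.cons σ (fun _ => 1)))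
    simp only [Fin.prod_univ_succ, Fin.cons_zero, Fin.cons_succ, Finset.prod_const_one,
      mul_one, hone] at h1
    exact h1
  have hinvpair : ∀ ρ : G →* ℂ, eta x y ρ * eta x y (invC ρ) = 1 := by
    intro ρ
    have := hmul3 ρ 1
    rwa [hone, mul_one, mul_one] at this
  have hmul : ∀ ρ σ : G →* ℂ, eta x y (ρ * σ) = eta x y ρ * eta x y σ := by
    intro ρ σ
    have h1 := hmul3 ρ σ
    have h2 := hinvpair (ρ * σ)
    have e1 : eta x y ρ * eta x y σ = (eta x y (invC (ρ * σ)))⁻¹ :=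
      eq_inv_of_mul_eq_one_left h1
    have e2 : eta x y (ρ * σ) = (eta x y (invC (ρ * σ)))⁻¹ :=
      eq_inv_of_mul_eq_one_left h2
    rw [e1, e2]
  -- build the double-dual character
  let ηhat : AddChar (AddChar (Additive G) ℂ) ℂ :=
    { toFun := fun ψ => eta x y (addCharToHom ψ)
      map_zero_eq_one' := by
        show eta x y (addCharToHom 0) = 1
        rw [addCharToHom_zero]; exact hone
      map_add_eq_mul' := fun ψ φ => by
        show eta x y (addCharToHom (ψ + φ))
            = eta x y (addCharToHom ψ) * eta x y (addCharToHom φ)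
        rw [addCharToHom_add]; exact hmul _ _ }
  obtain ⟨a, ha⟩ := AddChar.doubleDualEmb_bijective.surjective ηhat
  have heval : ∀ ρ : G →* ℂ, eta x y ρ = ρ a.toMul := by
    intro ρ
    have h := DFunLike.congr_fun ha (homToAddChar ρ)
    rw [AddChar.doubleDualEmb_apply] at h
    have h3 : eta x y (addCharToHom (homToAddChar ρ)) = (homToAddChar ρ) a := h.symm
    rw [addCharToHom_homToAddChar] at h3
    exact h3
  set g0 : G := Additive.toMul a with hg0
  refine ⟨g0⁻¹, fun h => ?_⟩
  have hfh : ∀ ρ : G →* ℂ,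
      fhat (fun h => (x h : ℂ)) ρ = fhat (fun h => (y (g0 * h) : ℂ)) ρ := by
    intro ρ
    have hX : fhat (fun h => (x h : ℂ)) ρ = ρ g0 * fhat (fun h => (y h : ℂ)) ρ := by
      have := heval ρ
      rw [eta, div_eq_iff (hy ρ)] at this
      exact this
    have hY : fhat (fun h => (y (g0 * h) : ℂ)) ρ = ρ g0 * fhat (fun h => (y h : ℂ)) ρ := by
      unfold fhat
      rw [Finset.mul_sum]
      refine Fintype.sum_equiv (Equiv.mulLeft g0) _ _ fun k => ?_
      show (starRingEnd ℂ) (ρ k) * (y (g0 * k) : ℂ)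
          = ρ g0 * ((starRingEnd ℂ) (ρ (g0 * k)) * (y (g0 * k) : ℂ))
      rw [conj_char, conj_char, mul_inv, map_mul]
      have h1 : ρ g0 * ρ g0⁻¹ = 1 := by rw [← map_mul, mul_inv_cancel, map_one]
      linear_combination (-(ρ k⁻¹ * (y (g0 * k) : ℂ))) * h1
    rw [hX, hY]
  have := fhat_inj (fun h => (x h : ℂ)) (fun h => (y (g0 * h) : ℂ)) hfh
  have hxy : (x h : ℂ) = (y (g0 * h) : ℂ) := congrFun this h
  rw [inv_inv]
  exact_mod_cast hxy
end

section
/- Let σ : ℂ → ℂ be continuous with coercivity: there exist C > 0 and n ∈ ℕ such that |σ(0) − σ(x)| ≥ C|x|ⁿ for all x ∈ ℂ. Let W, W' ∈ ℂ^d be unit-norm vectors (or of equal norm, normalized) such that sup_{‖x‖=1} |σ(⟨W,x⟩) − σ(⟨W',x⟩)| ≤ δ < C. Then there exists ρ ∈ ℂ with |ρ| = 1 such that ‖W − ρW'‖ ≤ √(2(1 − √(1 − (δ/C)^{2/n}))). -/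
/-- Unitarity-defect bound for McCulloch–Pitts neurons: if `σ : ℂ → ℂ` is
continuous and coercive (`|σ(0) − σ(x)| ≥ C|x|ⁿ`), `W, W'` are unit vectors,
and `|σ(⟨W,x⟩) − σ(⟨W',x⟩)| ≤ δ < C` for all unit `x`, then there is a
unimodular `ρ` with `‖W − ρW'‖ ≤ √(2(1 − √(1 − (δ/C)^{2/n})))`. -/
theorem stmt15 {dim : ℕ} (σ : ℂ → ℂ) (hσc : Continuous σ)
    (C : ℝ) (hC : 0 < C) (n : ℕ)
    (hcoer : ∀ z : ℂ, C * ‖z‖ ^ n ≤ ‖σ 0 - σ z‖)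
    (W W' : EuclideanSpace ℂ (Fin dim)) (hW : ‖W‖ = 1) (hW' : ‖W'‖ = 1)
    (δ : ℝ) (hδ0 : 0 ≤ δ) (hδC : δ < C)
    (hsup : ∀ x : EuclideanSpace ℂ (Fin dim), ‖x‖ = 1 →
      ‖σ (inner ℂ W x) - σ (inner ℂ W' x)‖ ≤ δ) :
    ∃ ρ : ℂ, ‖ρ‖ = 1 ∧
      ‖W - ρ • W'‖ ≤ Real.sqrt (2 * (1 - Real.sqrt (1 - (δ / C) ^ ((2 : ℝ) / n)))) := by
  have hn : 0 < n := by
    by_contra h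
    push_neg at h
    interval_cases n
    have := hcoer 0
    simp at this
    linarith
  classical
  set c : ℂ := inner ℂ W' W with hc
  set u : EuclideanSpace ℂ (Fin dim) := W - c • W' with hu
  have hW'u : (inner ℂ W' u : ℂ) = 0 := by
    simp [hu, inner_sub_right, inner_smul_right, inner_self_eq_norm_sq_to_K, hW', hc]
  have hWeq : W = c • W' + u := by simp [hu]
  have hpyth : 1 = ‖c‖ ^ 2 + ‖u‖ ^ 2 := by
    have h1 := norm_add_sq (𝕜 := ℂ) (c • W') u
    have h2 : (inner ℂ (c • W') u : ℂ) = 0 := by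
      rw [inner_smul_left, hW'u, mul_zero]
    rw [h2] at h1
    rw [← hWeq] at h1
    simp [hW, hW', norm_smul] at h1
    simpa using h1
  -- bound on ‖u‖²
  set ε2 : ℝ := (δ / C) ^ ((2 : ℝ) / n) with hε2
  have hδC1 : δ / C < 1 := (div_lt_one hC).2 hδC
  have hδC0 : 0 ≤ δ / C := div_nonneg hδ0 hC.le
  have hε2lt : ε2 < 1 := by
    rcases eq_or_lt_of_le hδC0 with h0 | h0
    · rw [hε2, ← h0]
      rw [Real.zero_rpow (by positivity)]
      norm_num
    · exact Real.rpow_lt_one hδC0 hδC1 (by positivity)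
  have hε20 : 0 ≤ ε2 := Real.rpow_nonneg hδC0 _
  have hub : ‖u‖ ^ 2 ≤ ε2 := by
    by_cases hu0 : u = 0
    · simp [hu0, hε20]
    · set x : EuclideanSpace ℂ (Fin dim) := ((‖u‖ : ℂ))⁻¹ • u with hx
      have hun : (0:ℝ) < ‖u‖ := norm_pos_iff.2 hu0
      have hxnorm : ‖x‖ = 1 := by
        rw [hx, norm_smul]
        simp
        field_simp
      have hW'x : (inner ℂ W' x : ℂ) = 0 := by
        rw [hx, inner_smul_right, hW'u, mul_zero]
      have hune : (‖u‖ : ℂ) ≠ 0 := by exact_mod_cast hun.ne'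
      have hWu2 : (inner ℂ W u : ℂ) = (‖u‖ : ℂ) ^ 2 := by
        rw [hWeq, inner_add_left, inner_smul_left, hW'u, mul_zero, zero_add,
          inner_self_eq_norm_sq_to_K]
        norm_num
      have hWx : (inner ℂ W x : ℂ) = (‖u‖ : ℂ) := by
        rw [hx, inner_smul_right, hWu2]
        field_simp
      have h1 := hsup x hxnorm
      rw [hW'x] at h1
      have h2 := hcoer (inner ℂ W x)
      have h3 : ‖σ (inner ℂ W x) - σ 0‖ = ‖σ 0 - σ (inner ℂ W x)‖ := by
        rw [← norm_neg, neg_sub]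
      have h4 : C * ‖(inner ℂ W x : ℂ)‖ ^ n ≤ δ := by
        calc C * ‖(inner ℂ W x : ℂ)‖ ^ n ≤ ‖σ 0 - σ (inner ℂ W x)‖ := h2
        _ = ‖σ (inner ℂ W x) - σ 0‖ := h3.symm
        _ ≤ δ := h1
      have h5 : ‖u‖ ^ n ≤ δ / C := by
        rw [le_div_iff₀ hC, mul_comm]
        simpa [hWx, Complex.norm_real, abs_of_pos hun] using h4
      -- ‖u‖² = (‖u‖^n)^(2/n) ≤ (δ/C)^(2/n)
      have h6 : (‖u‖ ^ n : ℝ) ^ ((2:ℝ)/n) ≤ ε2 :=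
        Real.rpow_le_rpow (by positivity) h5 (by positivity)
      have h7 : (‖u‖ ^ n : ℝ) ^ ((2:ℝ)/n) = ‖u‖ ^ 2 := by
        rw [← Real.rpow_natCast ‖u‖ n, ← Real.rpow_mul (norm_nonneg u)]
        have : (n : ℝ) * ((2:ℝ)/n) = 2 := by
          field_simp
        rw [this]
        norm_num [Real.rpow_two]
      rwa [h7] at h6
  -- |c| ≥ √(1 - ε2), c ≠ 0
  have hc2 : ‖c‖ ^ 2 = 1 - ‖u‖ ^ 2 := by linarith
  have hcge : Real.sqrt (1 - ε2) ≤ ‖c‖ := by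
    have : 1 - ε2 ≤ ‖c‖ ^ 2 := by linarith
    calc Real.sqrt (1 - ε2) ≤ Real.sqrt (‖c‖ ^ 2) := Real.sqrt_le_sqrt this
    _ = ‖c‖ := Real.sqrt_sq (norm_nonneg c)
  have hcpos : 0 < ‖c‖ := by
    have : (0:ℝ) < Real.sqrt (1 - ε2) := Real.sqrt_pos.2 (by linarith)
    linarith
  have hcne : c ≠ 0 := by
    intro h
    rw [h] at hcpos
    simp at hcpos
  refine ⟨c / (‖c‖ : ℂ), ?_, ?_⟩
  · rw [norm_div]
    simp [hcpos.ne']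
  · set ρ : ℂ := c / (‖c‖ : ℂ) with hρ
    have hρabs : ‖ρ‖ = 1 := by
      rw [hρ, norm_div]
      simp [hcpos.ne']
    have hre : RCLike.re (inner ℂ W (ρ • W') : ℂ) = ‖c‖ := by
      rw [inner_smul_right]
      have h1 : (inner ℂ W W' : ℂ) = starRingEnd ℂ c := by
        rw [hc, ← inner_conj_symm]
      rw [h1, hρ, div_mul_eq_mul_div, Complex.mul_conj, Complex.normSq_eq_norm_sq,
        ← Complex.ofReal_div]
      simp [pow_two, mul_div_assoc, div_self hcpos.ne']
    have hsq : ‖W - ρ • W'‖ ^ 2 = 2 - 2 * ‖c‖ := by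
      have h1 := norm_sub_sq (𝕜 := ℂ) W (ρ • W')
      rw [hre] at h1
      rw [h1, norm_smul, hW, hW']
      simp [hρabs]
      ring
    have hfin : ‖W - ρ • W'‖ ^ 2 ≤ 2 * (1 - Real.sqrt (1 - ε2)) := by
      rw [hsq]; linarith
    calc ‖W - ρ • W'‖ = Real.sqrt (‖W - ρ • W'‖ ^ 2) := (Real.sqrt_sq (norm_nonneg _)).symm
    _ ≤ Real.sqrt (2 * (1 - Real.sqrt (1 - ε2))) := Real.sqrt_le_sqrt hfin
end

section
/- Let σ : ℂ → Y be a function such that 0 is isolated in its fiber: there is an open set O ⊆ ℂ with σ⁻¹(σ(0)) ∩ O = {0}. Let W, W' ∈ ℂ^d be nonzero vectors of equal norm such that σ(⟨W,x⟩) = σ(⟨W',x⟩) for all x ∈ ℂ^d. Then W = ρ W' for some ρ ∈ ℂ with |ρ| = 1. -/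
/-- If `0` is isolated in its `σ`-fiber, and two nonzero equal-norm weight
vectors `W, W'` define the same function `x ↦ σ(⟨W,x⟩)`, then `W = ρ W'` for
some unimodular `ρ ∈ ℂ`. -/
theorem stmt16 {dim : ℕ} {Y : Type*} (σ : ℂ → Y)
    (O : Set ℂ) (hO : IsOpen O) (h0O : (0 : ℂ) ∈ O)
    (hfiber : ∀ z ∈ O, σ z = σ 0 → z = 0)
    (W W' : EuclideanSpace ℂ (Fin dim)) (hWne : W ≠ 0) (hW'ne : W' ≠ 0)
    (hnorm : ‖W‖ = ‖W'‖)
    (heq : ∀ x : EuclideanSpace ℂ (Fin dim),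
      σ (∑ i, W i * x i) = σ (∑ i, W' i * x i)) :
    ∃ ρ : ℂ, ‖ρ‖ = 1 ∧ W = ρ • W' := by
  -- Step 1: the kernel of ⟨W',·⟩ is contained in that of ⟨W,·⟩.
  have key : ∀ x : EuclideanSpace ℂ (Fin dim),
      (∑ i, W' i * x i) = 0 → (∑ i, W i * x i) = 0 := by
    intro x hx
    set b := ∑ i, W i * x i with hb
    by_contra hbne
    have hbabs : 0 < ‖b‖ := by
      simpa using (norm_pos_iff.mpr hbne)
    obtain ⟨ε, hε, hball⟩ := Metric.isOpen_iff.mp hO 0 h0O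
    set t : ℂ := ((ε / 2 : ℝ) : ℂ) / ((‖b‖ : ℝ) : ℂ) with ht
    have htne : t ≠ 0 := by
      apply div_ne_zero
      · exact_mod_cast (by positivity : (ε / 2 : ℝ) ≠ 0)
      · exact_mod_cast hbabs.ne'
    have h1 : (∑ i, W i * ((t • x : EuclideanSpace ℂ (Fin dim)) i)) = t * b := by
      rw [hb, Finset.mul_sum]
      refine Finset.sum_congr rfl fun i _ => ?_
      simp [PiLp.smul_apply, smul_eq_mul]; ring
    have h2 : (∑ i, W' i * ((t • x : EuclideanSpace ℂ (Fin dim)) i)) = 0 := by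
      have : (∑ i, W' i * ((t • x : EuclideanSpace ℂ (Fin dim)) i))
          = t * ∑ i, W' i * x i := by
        rw [Finset.mul_sum]
        refine Finset.sum_congr rfl fun i _ => ?_
        simp [PiLp.smul_apply, smul_eq_mul]; ring
      rw [this, hx, mul_zero]
    have htb : σ (t * b) = σ 0 := by
      have := heq (t • x)
      rwa [h1, h2] at this
    have habs : ‖t * b‖ = ε / 2 := by
      rw [norm_mul, ht, norm_div]
      simp only [Complex.norm_real, Real.norm_eq_abs]
      rw [abs_of_pos (by positivity), abs_of_pos hbabs]
      field_simp
    have hmem : t * b ∈ O := by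
      apply hball
      rw [Metric.mem_ball, dist_zero_right, habs]
      linarith
    have := hfiber _ hmem htb
    exact (mul_ne_zero htne hbne) this
  -- Step 2: deduce proportionality.
  set a : ℂ := ∑ i, W' i * (starRingEnd ℂ) (W' i) with ha
  have hane : a ≠ 0 := by
    intro h
    apply hW'ne
    have : ∀ i, Complex.normSq (W' i) = 0 := by
      have hsum : (∑ i, Complex.normSq (W' i)) = 0 := by
        have : a = ((∑ i, Complex.normSq (W' i) : ℝ) : ℂ) := by
          rw [ha]; push_cast
          exact Finset.sum_congr rfl fun i _ => (Complex.mul_conj (W' i))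
        rw [h] at this
        exact_mod_cast this.symm
      intro i
      exact (Finset.sum_eq_zero_iff_of_nonneg
        (fun i _ => Complex.normSq_nonneg _)).mp hsum i (Finset.mem_univ i)
    ext i
    exact Complex.normSq_eq_zero.mp (this i)
  set s : ℂ := ∑ i, W i * (starRingEnd ℂ) (W' i) with hs
  set ρ : ℂ := s / a with hρ
  have hWeq : W = ρ • W' := by
    ext j
    have hx : (∑ i, W' i * (((if i = j then a else 0) : ℂ) -
        (starRingEnd ℂ) (W' i) * W' j)) = 0 := by
      simp only [mul_sub, Finset.sum_sub_distrib, mul_ite, mul_zero,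
        Finset.sum_ite_eq', Finset.mem_univ, if_true]
      rw [show (∑ i, W' i * ((starRingEnd ℂ) (W' i) * W' j))
          = (∑ i, W' i * (starRingEnd ℂ) (W' i)) * W' j by
        rw [Finset.sum_mul]; exact Finset.sum_congr rfl fun i _ => by ring]
      rw [← ha]; ring
    have hk := key (WithLp.toLp 2 fun i => ((if i = j then a else 0) : ℂ) -
        (starRingEnd ℂ) (W' i) * W' j) (by simpa using hx)
    have hk' : W j * a - s * W' j = 0 := by
      have : (∑ i, W i * (((if i = j then a else 0) : ℂ) -
          (starRingEnd ℂ) (W' i) * W' j)) = W j * a - s * W' j := by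
        simp only [mul_sub, Finset.sum_sub_distrib, mul_ite, mul_zero,
          Finset.sum_ite_eq', Finset.mem_univ, if_true]
        rw [show (∑ i, W i * ((starRingEnd ℂ) (W' i) * W' j))
            = (∑ i, W i * (starRingEnd ℂ) (W' i)) * W' j by
          rw [Finset.sum_mul]; exact Finset.sum_congr rfl fun i _ => by ring]
      rw [← this]; simpa using hk
    have : W j = ρ * W' j := by
      rw [hρ]
      field_simp
      linear_combination hk'
    simpa [PiLp.smul_apply, smul_eq_mul] using this
  refine ⟨ρ, ?_, hWeq⟩
  have hW'norm : ‖W'‖ ≠ 0 := norm_ne_zero_iff.mpr hW'ne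
  have : ‖W‖ = ‖ρ‖ * ‖W'‖ := by
    rw [hWeq, norm_smul]
  rw [hnorm] at this
  have h1 : ‖ρ‖ * ‖W'‖ = 1 * ‖W'‖ := by rw [one_mul, ← this]
  exact mul_right_cancel₀ hW'norm h1
end
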